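/- Let n = p_1^{r_1}···p_k^{r_k} with p_1 < ··· < p_k primes, and let R = ∏_{i=1}^k F_{p_i^{r_i}}. For any positive integer e with e(e−1) dividing gcd(p_1^{r_1}−1, ..., p_k^{r_k}−1), there exists an (en, (en−1)/(e−1) + 1, e−2) zero-difference balanced function from (R × Z_e, +) to (Z_{(en−1)/(e−1)+1}, +). -/

import Mathlib

/-- `f : A → B` is an `(N, m, λ)` zero-difference balanced function. -/
def IsZDB {A B : Type*} [AddGroup A] (f : A → B) (N m lam : ℕ) : Prop :=
  Nat.card A = N ∧ Set.ncard (Set.range f) = m ∧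
    ∀ a : A, a ≠ 0 → Set.ncard {x : A | f (x + a) = f x} = lam



open Finset


section Construction

variable {R : Type*} [CommRing R]

/-- the multiplicative `⟨w⟩`-orbit of `v`. -/
def orb (w v : R) : Set R := {v' | ∃ s : ℕ, v' = v * w ^ s}

/-- The raw ZDB labelling function. -/
noncomputable def zdbF (e : ℕ) (w : R) (x : R × ZMod e) : Bool ⊕ (R ⊕ Set R) := by
  classical
  exact if x.1 = 0 then .inl (decide (x.2 = 0))
    else if x.2 = -1 then .inr (.inr (orb w x.1))
    else .inr (.inl (x.1 * w ^ (e - 1 - x.2.val)))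

variable {e : ℕ} {w : R} (he : 2 ≤ e) (hw : w ^ (e - 1) = 1)

lemma zdbF_zero (t : ZMod e) : zdbF e w (0, t) = .inl (decide (t = 0)) := by
  classical simp [zdbF]

lemma zdbF_coset {v : R} (hv : v ≠ 0) : zdbF e w (v, -1) = .inr (.inr (orb w v)) := by
  classical simp [zdbF, hv]

lemma zdbF_run {v : R} {t : ZMod e} (hv : v ≠ 0) (ht : t ≠ -1) :
    zdbF e w (v, t) = .inr (.inl (v * w ^ (e - 1 - t.val))) := by
  classical simp [zdbF, hv, ht]

include hw in
lemma pow_mod_w (s : ℕ) (hee : e - 1 ≠ 0) : w ^ s = w ^ (s % (e - 1)) := by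
  conv_lhs => rw [← Nat.div_add_mod s (e - 1)]
  rw [pow_add, pow_mul, hw, one_pow, one_mul]

include he hw in
lemma isUnit_w : IsUnit w := by
  have h1 : w * w ^ (e - 2) = 1 := by
    rw [← pow_succ']
    have : e - 2 + 1 = e - 1 := by omega
    rw [this, hw]
  exact IsUnit.of_mul_eq_one _ h1

end Construction

section Construction2

variable {R : Type*} [CommRing R] {e : ℕ} {w : R}

variable (he : 2 ≤ e) (hw : w ^ (e - 1) = 1)
  (hu : ∀ s : ℕ, 0 < s → s < e - 1 → IsUnit (w ^ s - 1))

include he hw hu in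
lemma keyunit : ∀ a b : ℕ, a % (e - 1) ≠ b % (e - 1) → IsUnit (w ^ a - w ^ b) := by
  have hee : e - 1 ≠ 0 := by omega
  -- first for reduced exponents with a < b
  have main : ∀ a b : ℕ, a < b → b < e - 1 → IsUnit (w ^ b - w ^ a) := by
    intro a b hab hb
    have hba : a + (b - a) = b := by omega
    have h1 : w ^ b - w ^ a = w ^ a * (w ^ (b - a) - 1) := by
      rw [mul_sub, ← pow_add, mul_one, hba]
    rw [h1]
    exact ((isUnit_w he hw).pow a).mul (hu (b - a) (by omega) (by omega))
  intro a b hab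
  rw [pow_mod_w hw a hee, pow_mod_w hw b hee]
  rcases lt_trichotomy (a % (e - 1)) (b % (e - 1)) with h | h | h
  · have := main _ _ h (Nat.mod_lt _ (by omega))
    rw [← neg_sub]
    exact this.neg
  · exact absurd h hab
  · exact main _ _ h (Nat.mod_lt _ (by omega))

include he hw hu in
lemma cancel_w {v : R} {a b : ℕ} (h : v * w ^ a = v * w ^ b)
    (hab : a % (e - 1) ≠ b % (e - 1)) : v = 0 := by
  have h2 : v * (w ^ a - w ^ b) = 0 := by rw [mul_sub, h, sub_self]
  have h3 := keyunit he hw hu a b hab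
  exact (h3.mul_left_eq_zero).mp h2

include he hw in
lemma orb_eq_iff {v v' : R} :
    orb w v = orb w v' ↔ ∃ s : ℕ, s < e - 1 ∧ v' = v * w ^ s := by
  have hee : e - 1 ≠ 0 := by omega
  constructor
  · intro h
    have hv' : v' ∈ orb w v' := ⟨0, by simp⟩
    rw [← h] at hv'
    obtain ⟨s, hs⟩ := hv'
    exact ⟨s % (e - 1), Nat.mod_lt _ (by omega), by rw [← pow_mod_w hw s hee]; exact hs⟩
  · rintro ⟨s, hs, rfl⟩
    ext y
    constructor
    · rintro ⟨t, rfl⟩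
      refine ⟨(e - 1 - s) + t, ?_⟩
      have h5 : s + (e - 1 - s + t) = (e - 1) + t := by omega
      rw [mul_assoc, ← pow_add, h5, pow_add, hw, one_mul]
    · rintro ⟨t, rfl⟩
      refine ⟨s + t, ?_⟩
      rw [mul_assoc, ← pow_add]

end Construction2

section Construction3

variable {e : ℕ} [NeZero e]

lemma ncard_ne (a : ZMod e) : Set.ncard {t : ZMod e | t ≠ a} = e - 1 := by
  classical
  rw [Set.ncard_eq_toFinset_card']
  have h1 : {t : ZMod e | t ≠ a}.toFinset = Finset.univ.erase a := by
    ext t; simp [Finset.mem_erase]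
  rw [h1, Finset.card_erase_of_mem (Finset.mem_univ a), Finset.card_univ, ZMod.card]

lemma ncard_ne_two (a b : ZMod e) (hab : a ≠ b) :
    Set.ncard {t : ZMod e | t ≠ a ∧ t ≠ b} = e - 2 := by
  classical
  rw [Set.ncard_eq_toFinset_card']
  have h1 : {t : ZMod e | t ≠ a ∧ t ≠ b}.toFinset = (Finset.univ.erase a).erase b := by
    ext t; simp [Finset.mem_erase]; tauto
  rw [h1, Finset.card_erase_of_mem (by simp [Finset.mem_erase, hab.symm]),
    Finset.card_erase_of_mem (Finset.mem_univ a), Finset.card_univ, ZMod.card]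
  omega

lemma ncard_Ico_nat (a b : ℕ) : Set.ncard (Set.Ico a b) = b - a := by
  rw [← Finset.coe_Ico, Set.ncard_coe_finset, Nat.card_Ico]

end Construction3

section Construction4

variable {R : Type*} [CommRing R] {e : ℕ} {w : R}
variable (he : 2 ≤ e) (hw : w ^ (e - 1) = 1)
  (hu : ∀ s : ℕ, 0 < s → s < e - 1 → IsUnit (w ^ s - 1))

include he in
lemma fiberA : {x : R × ZMod e | zdbF e w x = .inl true} = {((0 : R), (0 : ZMod e))} := by
  classical
  ext ⟨v, t⟩
  simp only [Set.mem_setOf_eq, Set.mem_singleton_iff, Prod.mk.injEq]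
  constructor
  · intro h
    by_cases hv : v = 0
    · subst hv
      rw [zdbF_zero] at h
      by_cases ht : t = 0
      · exact ⟨rfl, ht⟩
      · simp [ht] at h
    · by_cases ht : t = -1
      · subst ht; rw [zdbF_coset hv] at h; exact absurd h (by simp)
      · rw [zdbF_run hv ht] at h; exact absurd h (by simp)
  · rintro ⟨rfl, rfl⟩
    rw [zdbF_zero]; simp

include he in
lemma fiberB : {x : R × ZMod e | zdbF e w x = .inl false}
    = (fun t => ((0 : R), t)) '' {t : ZMod e | t ≠ 0} := by
  classical
  ext ⟨v, t⟩
  simp only [Set.mem_setOf_eq, Set.mem_image, Prod.mk.injEq]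
  constructor
  · intro h
    by_cases hv : v = 0
    · subst hv
      rw [zdbF_zero] at h
      by_cases ht : t = 0
      · simp [ht] at h
      · exact ⟨t, ht, rfl, rfl⟩
    · by_cases ht : t = -1
      · subst ht; rw [zdbF_coset hv] at h; exact absurd h (by simp)
      · rw [zdbF_run hv ht] at h; exact absurd h (by simp)
  · rintro ⟨t', ht', rfl, rfl⟩
    rw [zdbF_zero]; simp [ht']

end Construction4

section Construction5

variable {R : Type*} [CommRing R] {e : ℕ} {w : R}
variable [NeZero e] (he : 2 ≤ e) (hw : w ^ (e - 1) = 1)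
  (hu : ∀ s : ℕ, 0 < s → s < e - 1 → IsUnit (w ^ s - 1))

lemma ne_neg_one_iff {t : ZMod e} : t ≠ -1 ↔ t.val ≠ e - 1 := by
  have h1 : (-1 : ZMod e).val = e - 1 := by
    obtain ⟨e', rfl⟩ : ∃ e', e = e' + 1 := ⟨e - 1, by have := NeZero.pos e; omega⟩
    simpa using ZMod.val_neg_one e'
  rw [← h1]
  exact (ZMod.val_injective e).ne_iff.symm

include he hw in
lemma run_ne_zero {v : R} (hv : v ≠ 0) (s : ℕ) : v * w ^ s ≠ 0 := by
  intro h
  exact hv (((isUnit_w he hw).pow s).mul_left_eq_zero.mp h)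

include he hw in
lemma fiberRun {x : R} (hx : x ≠ 0) :
    {x' : R × ZMod e | zdbF e w x' = .inr (.inl x)}
      = (fun t => (x * w ^ t.val, t)) '' {t : ZMod e | t ≠ -1} := by
  classical
  ext ⟨v, t⟩
  simp only [Set.mem_setOf_eq, Set.mem_image, Prod.mk.injEq]
  constructor
  · intro h
    by_cases hv : v = 0
    · subst hv; rw [zdbF_zero] at h; exact absurd h (by simp)
    by_cases ht : t = -1
    · subst ht; rw [zdbF_coset hv] at h; exact absurd h (by simp)
    rw [zdbF_run hv ht] at h
    simp only [Sum.inr.injEq, Sum.inl.injEq] at h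
    refine ⟨t, ht, ?_, rfl⟩
    have h2 : v * w ^ (e - 1 - t.val) * w ^ t.val = x * w ^ t.val := by rw [h]
    rw [mul_assoc, ← pow_add] at h2
    have h3 : e - 1 - t.val + t.val = e - 1 := by
      have := ZMod.val_lt t
      have : t.val ≠ e - 1 := ne_neg_one_iff.mp ht
      omega
    rw [h3, hw, mul_one] at h2
    exact h2.symm
  · rintro ⟨t', ht', ⟨rfl, rfl⟩⟩
    rw [zdbF_run (run_ne_zero he hw hx t'.val) ht']
    simp only [Sum.inr.injEq, Sum.inl.injEq]
    rw [mul_assoc, ← pow_add]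
    have h3 : t'.val + (e - 1 - t'.val) = e - 1 := by
      have hlt := ZMod.val_lt t'
      have hne : t'.val ≠ e - 1 := ne_neg_one_iff.mp ht'
      omega
    rw [h3, hw, mul_one]

end Construction5

section Construction6

variable {R : Type*} [CommRing R] {e : ℕ} {w : R}
variable [NeZero e] (he : 2 ≤ e) (hw : w ^ (e - 1) = 1)
  (hu : ∀ s : ℕ, 0 < s → s < e - 1 → IsUnit (w ^ s - 1))

include he hw in
lemma fiberCoset {v₀ : R} (hv₀ : v₀ ≠ 0) :
    {x' : R × ZMod e | zdbF e w x' = .inr (.inr (orb w v₀))}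
      = (fun s : ℕ => (v₀ * w ^ s, (-1 : ZMod e))) '' Set.Ico 0 (e - 1) := by
  classical
  ext ⟨v, t⟩
  simp only [Set.mem_setOf_eq, Set.mem_image, Prod.mk.injEq, Set.mem_Ico]
  constructor
  · intro h
    by_cases hv : v = 0
    · subst hv; rw [zdbF_zero] at h; exact absurd h (by simp)
    by_cases ht : t = -1
    · subst ht
      rw [zdbF_coset hv] at h
      simp only [Sum.inr.injEq] at h
      obtain ⟨s, hs, hvs⟩ := (orb_eq_iff he hw).mp h.symm
      exact ⟨s, ⟨Nat.zero_le _, hs⟩, hvs.symm, rfl⟩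
    · rw [zdbF_run hv ht] at h; exact absurd h (by simp)
  · rintro ⟨s, ⟨-, hs⟩, rfl, rfl⟩
    rw [zdbF_coset (run_ne_zero he hw hv₀ s)]
    simp only [Sum.inr.injEq]
    exact ((orb_eq_iff he hw).mpr ⟨s, hs, rfl⟩).symm

-- mod helpers
lemma gmod_ne_zero {j j' : ℕ} (hj : j < e - 1) (hj' : j' < e - 1) (hjj : j ≠ j') :
    (e - 1 - j + j') % (e - 1) ≠ 0 := by
  rcases lt_or_gt_of_ne hjj with h | h
  · have h1 : e - 1 - j + j' = (e - 1) + (j' - j) := by omega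
    rw [h1, Nat.add_mod_left, Nat.mod_eq_of_lt (by omega)]
    omega
  · rw [Nat.mod_eq_of_lt (by omega)]
    omega

lemma mod_sub_inj {j j' : ℕ} (hj : j < e - 1) (hj' : j' < e - 1) (hjj : j ≠ j') :
    (e - 1 - j) % (e - 1) ≠ (e - 1 - j') % (e - 1) := by
  rcases Nat.eq_zero_or_pos j with rfl | hj0
  · rw [Nat.sub_zero, Nat.mod_self, Nat.mod_eq_of_lt (by omega)]
    omega
  rcases Nat.eq_zero_or_pos j' with rfl | hj0'
  · rw [Nat.sub_zero, Nat.mod_self, Nat.mod_eq_of_lt (by omega)]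
    omega
  rw [Nat.mod_eq_of_lt (by omega), Nat.mod_eq_of_lt (by omega)]
  omega

end Construction6

section Construction7

variable {R : Type*} [CommRing R] {e : ℕ} {w : R}
variable [NeZero e] (he : 2 ≤ e) (hw : w ^ (e - 1) = 1)
  (hu : ∀ s : ℕ, 0 < s → s < e - 1 → IsUnit (w ^ s - 1))

include he hw hu in
lemma lambda_case1 {β : ZMod e} (hβ : β ≠ 0) :
    {x : R × ZMod e | zdbF e w (x + (0, β)) = zdbF e w x}
      = (fun t => ((0 : R), t)) '' {t : ZMod e | t ≠ 0 ∧ t ≠ -β} := by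
  classical
  ext ⟨v, t⟩
  simp only [Set.mem_setOf_eq, Set.mem_image, Prod.mk.injEq, Prod.mk_add_mk, add_zero]
  constructor
  · intro h
    by_cases hv : v = 0
    · subst hv
      rw [zdbF_zero, zdbF_zero] at h
      simp only [Sum.inl.injEq, decide_eq_decide] at h
      by_cases ht : t = 0
      · rw [ht] at h; simp at h
        exact absurd h hβ
      · have htb : t + β ≠ 0 := fun hh => ht (h.mp hh)
        exact ⟨t, ⟨ht, fun hh => htb (by rw [hh]; ring)⟩, rfl, rfl⟩
    · exfalso
      by_cases ht : t = -1
      · have htb : t + β ≠ -1 := by rw [ht]; intro hh; apply hβ; linear_combination hh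
        rw [zdbF_run hv htb, ht, zdbF_coset hv] at h
        simp at h
      · by_cases htb : t + β = -1
        · rw [htb, zdbF_coset hv, zdbF_run hv ht] at h
          simp at h
        · rw [zdbF_run hv htb, zdbF_run hv ht] at h
          simp only [Sum.inr.injEq, Sum.inl.injEq] at h
          have hj : t.val < e - 1 := by
            have := ZMod.val_lt t; have := ne_neg_one_iff.mp ht; omega
          have hj' : (t + β).val < e - 1 := by
            have := ZMod.val_lt (t + β); have := ne_neg_one_iff.mp htb; omega
          have hjj : (t + β).val ≠ t.val := by
            intro hh
            exact hβ (by have := ZMod.val_injective e hh; linear_combination this)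
          exact hv (cancel_w he hw hu h (mod_sub_inj hj' hj hjj))
  · rintro ⟨t', ⟨ht0, htb⟩, rfl, rfl⟩
    rw [zdbF_zero, zdbF_zero]
    simp only [Sum.inl.injEq, decide_eq_decide]
    constructor
    · intro hh; exact absurd (by linear_combination hh : t' = -β) htb
    · intro hh; exact absurd hh ht0

end Construction7

section Construction8

variable {R : Type*} [CommRing R] {e : ℕ} {w : R}
variable [NeZero e] (he : 2 ≤ e) (hw : w ^ (e - 1) = 1)
  (hu : ∀ s : ℕ, 0 < s → s < e - 1 → IsUnit (w ^ s - 1))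

include he hw hu in
lemma unit_wg {g : ℕ} (hg : g % (e - 1) ≠ 0) : IsUnit (w ^ g - 1) := by
  have := keyunit he hw hu g 0 (by simpa using hg)
  simpa using this

include he hw hu in
lemma vsol_mul {α : R} {g : ℕ} (hg : g % (e - 1) ≠ 0) :
    (α * Ring.inverse (w ^ g - 1)) * (w ^ g - 1) = α := by
  rw [mul_assoc, Ring.inverse_mul_cancel _ (unit_wg he hw hu hg), mul_one]

include he hw hu in
lemma vsol_ne {α : R} (hα : α ≠ 0) {g : ℕ} (hg : g % (e - 1) ≠ 0) :
    α * Ring.inverse (w ^ g - 1) ≠ 0 := by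
  intro h
  apply hα
  rw [← vsol_mul he hw hu hg (α := α), h, zero_mul]

include he hw hu in
lemma vsol_add {α : R} {g : ℕ} (hg : g % (e - 1) ≠ 0) :
    α * Ring.inverse (w ^ g - 1) + α = (α * Ring.inverse (w ^ g - 1)) * w ^ g := by
  have h := vsol_mul he hw hu hg (α := α)
  linear_combination -h

include he hw hu in
lemma vsol_eq {α v : R} {g : ℕ} (hg : g % (e - 1) ≠ 0) (hv : v * (w ^ g - 1) = α) :
    v = α * Ring.inverse (w ^ g - 1) := by
  rw [← hv, mul_assoc, Ring.mul_inverse_cancel _ (unit_wg he hw hu hg), mul_one]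

end Construction8

section Construction9

variable {R : Type*} [CommRing R] {e : ℕ} {w : R}
variable [NeZero e] (he : 2 ≤ e) (hw : w ^ (e - 1) = 1)
  (hu : ∀ s : ℕ, 0 < s → s < e - 1 → IsUnit (w ^ s - 1))

include he hw hu in
lemma lambda_case2 {α : R} (hα : α ≠ 0) :
    {x : R × ZMod e | zdbF e w (x + (α, 0)) = zdbF e w x}
      = (fun s : ℕ => (α * Ring.inverse (w ^ s - 1), (-1 : ZMod e))) '' Set.Ico 1 (e - 1) := by
  classical
  ext ⟨v, t⟩
  simp only [Set.mem_setOf_eq, Set.mem_image, Prod.mk.injEq, Prod.mk_add_mk, add_zero,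
    Set.mem_Ico]
  constructor
  · intro h
    by_cases hv : v = 0
    · subst hv
      by_cases hva : (0 : R) + α = 0
      · exact absurd (by simpa using hva) hα
      rw [zdbF_zero] at h
      exfalso
      by_cases ht : t = -1
      · rw [ht, zdbF_coset hva] at h; simp at h
      · rw [zdbF_run hva ht] at h; simp at h
    by_cases hva : v + α = 0
    · exfalso
      rw [hva] at h
      rw [zdbF_zero] at h
      by_cases ht : t = -1
      · rw [ht, zdbF_coset hv] at h; simp at h
      · rw [zdbF_run hv ht] at h; simp at h
    by_cases ht : t = -1
    · subst ht
      rw [zdbF_coset hva, zdbF_coset hv] at h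
      simp only [Sum.inr.injEq] at h
      obtain ⟨s, hs, hvs⟩ := (orb_eq_iff he hw).mp h.symm
      have hs0 : s ≠ 0 := by
        rintro rfl
        simp only [pow_zero, mul_one] at hvs
        exact hα (by linear_combination hvs)
      have hg : s % (e - 1) ≠ 0 := by rw [Nat.mod_eq_of_lt hs]; exact hs0
      have hveq : v * (w ^ s - 1) = α := by linear_combination -hvs
      exact ⟨s, ⟨by omega, hs⟩, (vsol_eq he hw hu hg hveq).symm, rfl⟩
    · exfalso
      rw [zdbF_run hva ht, zdbF_run hv ht] at h
      simp only [Sum.inr.injEq, Sum.inl.injEq] at h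
      have : α * w ^ (e - 1 - t.val) = 0 := by linear_combination h
      exact hα (((isUnit_w he hw).pow _).mul_left_eq_zero.mp this)
  · rintro ⟨s, ⟨hs1, hs2⟩, rfl, rfl⟩
    have hg : s % (e - 1) ≠ 0 := by rw [Nat.mod_eq_of_lt hs2]; omega
    set v := α * Ring.inverse (w ^ s - 1) with hvdef
    have hvne : v ≠ 0 := vsol_ne he hw hu hα hg
    have hvadd : v + α = v * w ^ s := vsol_add he hw hu hg
    have hvane : v + α ≠ 0 := by rw [hvadd]; exact run_ne_zero he hw hvne s
    rw [hvadd, zdbF_coset (by rw [← hvadd]; exact hvane), zdbF_coset hvne]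
    simp only [Sum.inr.injEq]
    exact ((orb_eq_iff he hw).mpr ⟨s, hs2, rfl⟩).symm

include he hw hu in
lemma lambda_case3 {α : R} {β : ZMod e} (hα : α ≠ 0) (hβ : β ≠ 0) :
    {x : R × ZMod e | zdbF e w (x + (α, β)) = zdbF e w x}
      = (fun t : ZMod e =>
          (α * Ring.inverse (w ^ (e - 1 - t.val + (t + β).val) - 1), t))
        '' {t : ZMod e | t ≠ -1 ∧ t ≠ -1 - β} := by
  classical
  have hval : ∀ t : ZMod e, t ≠ -1 → t.val < e - 1 := fun t ht => by
    have := ZMod.val_lt t; have := ne_neg_one_iff.mp ht; omega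
  have hjj : ∀ t : ZMod e, (t + β).val ≠ t.val := fun t hh =>
    hβ (by have := ZMod.val_injective e hh; linear_combination this)
  have hgm : ∀ t : ZMod e, t ≠ -1 → t + β ≠ -1 →
      (e - 1 - t.val + (t + β).val) % (e - 1) ≠ 0 := fun t ht htb =>
    gmod_ne_zero (hval t ht) (hval _ htb) (fun hh => hjj t hh.symm)
  ext ⟨v, t⟩
  simp only [Set.mem_setOf_eq, Set.mem_image, Prod.mk.injEq, Prod.mk_add_mk]
  constructor
  · intro h
    by_cases hv : v = 0
    · subst hv
      by_cases hva : (0 : R) + α = 0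
      · exact absurd (by simpa using hva) hα
      rw [zdbF_zero] at h
      exfalso
      by_cases ht : t + β = -1
      · rw [ht, zdbF_coset hva] at h; simp at h
      · rw [zdbF_run hva ht] at h; simp at h
    by_cases hva : v + α = 0
    · exfalso
      rw [hva, zdbF_zero] at h
      by_cases ht : t = -1
      · rw [ht, zdbF_coset hv] at h; simp at h
      · rw [zdbF_run hv ht] at h; simp at h
    by_cases ht : t = -1
    · exfalso
      have htb : t + β ≠ -1 := by
        rw [ht]; intro hh; exact hβ (by linear_combination hh)
      rw [zdbF_run hva htb, ht, zdbF_coset hv] at h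
      simp at h
    by_cases htb : t + β = -1
    · exfalso
      rw [htb, zdbF_coset hva, zdbF_run hv ht] at h
      simp at h
    -- main run-run case
    rw [zdbF_run hva htb, zdbF_run hv ht] at h
    simp only [Sum.inr.injEq, Sum.inl.injEq] at h
    refine ⟨t, ⟨ht, fun hh => htb (by rw [hh]; ring)⟩, ?_, rfl⟩
    · -- derive v = α * inverse ...
      have hj := hval t ht
      have hj' := hval _ htb
      have hmul := congrArg (fun z => z * w ^ (t + β).val) h
      rw [mul_assoc, mul_assoc, ← pow_add, ← pow_add] at hmul
      have h1 : e - 1 - (t + β).val + (t + β).val = e - 1 := by omega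
      rw [h1, hw, mul_one] at hmul
      -- hmul : v + α = v * w ^ (e - 1 - t.val + (t + β).val)
      have hveq : v * (w ^ (e - 1 - t.val + (t + β).val) - 1) = α := by
        linear_combination -hmul
      exact (vsol_eq he hw hu (hgm t ht htb) hveq).symm
  · rintro ⟨t', ⟨ht, htb'⟩, rfl, rfl⟩
    have htb : t' + β ≠ -1 := fun hh => htb' (by linear_combination hh)
    have hg := hgm t' ht htb
    set g := e - 1 - t'.val + (t' + β).val with hgdef
    set v := α * Ring.inverse (w ^ g - 1) with hvdef
    have hvne : v ≠ 0 := vsol_ne he hw hu hα hg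
    have hvadd : v + α = v * w ^ g := vsol_add he hw hu hg
    have hvane : v + α ≠ 0 := by rw [hvadd]; exact run_ne_zero he hw hvne g
    rw [zdbF_run hvane htb, zdbF_run hvne ht]
    simp only [Sum.inr.injEq, Sum.inl.injEq]
    rw [hvadd, mul_assoc, ← pow_add]
    have h2 : g + (e - 1 - (t' + β).val) = (e - 1) + (e - 1 - t'.val) := by
      have := hval t' ht; have := hval _ htb
      omega
    rw [h2, pow_add, hw, one_mul]

end Construction9

section Abstract

theorem zdb_abstract {R : Type*} [CommRing R] [Fintype R] {e : ℕ} (he : 2 ≤ e) (w : R)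
    (hw : w ^ (e - 1) = 1) (hu : ∀ s : ℕ, 0 < s → s < e - 1 → IsUnit (w ^ s - 1)) :
    ∃ f : (R × ZMod e) → ZMod ((e * Fintype.card R - 1) / (e - 1) + 1),
      IsZDB f (e * Fintype.card R) ((e * Fintype.card R - 1) / (e - 1) + 1) (e - 2) := by
  classical
  haveI : NeZero e := ⟨by omega⟩
  set N := Fintype.card R with hN
  set m := (e * N - 1) / (e - 1) + 1 with hm
  haveI : NeZero m := ⟨Nat.succ_ne_zero _⟩
  set T : Finset (Bool ⊕ (R ⊕ Set R)) := Finset.univ.image (zdbF e w) with hT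
  -- cardinality of fibers
  have hfilter : ∀ l, (Finset.univ.filter (fun x => zdbF e w x = l)).card
      = Set.ncard {x : R × ZMod e | zdbF e w x = l} := by
    intro l
    rw [Set.ncard_eq_toFinset_card']
    congr 1
    ext x
    simp
  have hcardA : (Finset.univ.filter (fun x => zdbF e w x = Sum.inl true)).card = 1 := by
    rw [hfilter, fiberA he, Set.ncard_singleton]
  have hcard : ∀ l ∈ T, l ≠ Sum.inl true →
      (Finset.univ.filter (fun x => zdbF e w x = l)).card = e - 1 := by
    intro l hl hlA
    obtain ⟨x₀, -, hx₀⟩ := Finset.mem_image.mp hl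
    rw [hfilter]
    obtain ⟨v₀, t₀⟩ := x₀
    by_cases hv₀ : v₀ = 0
    · subst hv₀
      rw [zdbF_zero] at hx₀
      by_cases ht₀ : t₀ = 0
      · exact absurd (by rw [← hx₀, ht₀]; simp) hlA
      · have : l = Sum.inl false := by rw [← hx₀]; simp [ht₀]
        subst this
        rw [fiberB he, Set.ncard_image_of_injective _ (by intro a b hab; simpa using hab),
          ncard_ne]
    · by_cases ht₀ : t₀ = -1
      · subst ht₀
        rw [zdbF_coset hv₀] at hx₀
        subst hx₀
        have hinj : Set.InjOn (fun s : ℕ => (v₀ * w ^ s, (-1 : ZMod e))) (Set.Ico 0 (e - 1)) := by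
          intro a ha b hb hab
          simp only [Set.mem_Ico] at ha hb
          simp only [Prod.mk.injEq] at hab
          have := cancel_w he hw hu hab.1.symm
          by_contra hne
          exact hv₀ (this (by rw [Nat.mod_eq_of_lt ha.2, Nat.mod_eq_of_lt hb.2]; omega))
        rw [fiberCoset he hw hv₀, Set.ncard_image_of_injOn hinj, ncard_Ico_nat]
        omega
      · rw [zdbF_run hv₀ ht₀] at hx₀
        subst hx₀
        rw [fiberRun he hw (run_ne_zero he hw hv₀ _),
          Set.ncard_image_of_injective _ (fun a b hab => by simpa using (Prod.ext_iff.mp hab).2),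
          ncard_ne]
  -- total count
  have hGcard : (Finset.univ : Finset (R × ZMod e)).card = e * N := by
    rw [Finset.card_univ, Fintype.card_prod, ZMod.card, hN, mul_comm]
  have hsum : (Finset.univ : Finset (R × ZMod e)).card
      = ∑ l ∈ T, (Finset.univ.filter (fun x => zdbF e w x = l)).card :=
    Finset.card_eq_sum_card_fiberwise (fun x _ => Finset.mem_image_of_mem _ (Finset.mem_univ x))
  have hAT : Sum.inl true ∈ T := by
    apply Finset.mem_image.mpr
    exact ⟨((0 : R), (0 : ZMod e)), Finset.mem_univ _, by rw [zdbF_zero]; simp⟩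
  have hsum2 : e * N = 1 + (T.card - 1) * (e - 1) := by
    rw [← hGcard, hsum, ← Finset.add_sum_erase _ _ hAT, hcardA]
    congr 1
    rw [Finset.sum_congr rfl (fun l hl => hcard l (Finset.mem_of_mem_erase hl)
      (Finset.ne_of_mem_erase hl)), Finset.sum_const, Finset.card_erase_of_mem hAT,
      smul_eq_mul]
  have hT1 : 1 ≤ T.card := Finset.card_pos.mpr ⟨_, hAT⟩
  have hmT : T.card = m := by
    rw [hm]
    have h1 : e * N - 1 = (T.card - 1) * (e - 1) := by omega
    rw [h1, Nat.mul_div_cancel _ (by omega : 0 < e - 1)]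
    omega
  -- the range of zdbF is T
  have hrange : Set.range (zdbF e w) = ↑T := by
    ext l
    simp [hT, eq_comm]
  have hcardrange : Nat.card (Set.range (zdbF e w)) = m := by
    rw [hrange, Nat.card_coe_set_eq, Set.ncard_coe_finset, hmT]
  let eqv : ↥(Set.range (zdbF e w)) ≃ ZMod m := Fintype.equivOfCardEq (by
    rw [← Nat.card_eq_fintype_card, ← Nat.card_eq_fintype_card, hcardrange, Nat.card_zmod])
  refine ⟨fun x => eqv ⟨zdbF e w x, Set.mem_range_self x⟩, ?_, ?_, ?_⟩
  · rw [Nat.card_prod, Nat.card_eq_fintype_card, Nat.card_zmod, mul_comm]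
  · have hsurj : Function.Surjective
        (fun x => eqv ⟨zdbF e w x, Set.mem_range_self x⟩) := by
      intro z
      obtain ⟨x, hx⟩ := (eqv.symm z).2
      refine ⟨x, ?_⟩
      have h2 : (⟨zdbF e w x, Set.mem_range_self x⟩ : ↥(Set.range (zdbF e w)))
          = eqv.symm z := Subtype.ext hx
      show eqv ⟨zdbF e w x, Set.mem_range_self x⟩ = z
      rw [h2, Equiv.apply_symm_apply]
    rw [hsurj.range_eq, Set.ncard_univ, Nat.card_zmod]
  · rintro ⟨α, β⟩ ha
    have hset : {x : R × ZMod e | eqv ⟨zdbF e w (x + (α, β)), Set.mem_range_self _⟩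
        = eqv ⟨zdbF e w x, Set.mem_range_self x⟩}
        = {x : R × ZMod e | zdbF e w (x + (α, β)) = zdbF e w x} := by
      ext x
      simp only [Set.mem_setOf_eq, EmbeddingLike.apply_eq_iff_eq, Subtype.mk.injEq]
    rw [hset]
    by_cases hα : α = 0
    · subst hα
      have hβ : β ≠ 0 := by
        intro hh; exact ha (by rw [hh]; rfl)
      rw [lambda_case1 he hw hu hβ,
        Set.ncard_image_of_injective _ (fun a b hab => (Prod.ext_iff.mp hab).2),
        ncard_ne_two 0 (-β) (fun hh => hβ (by simpa using hh.symm))]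
    · by_cases hβ : β = 0
      · subst hβ
        have hinj : Set.InjOn
            (fun s : ℕ => (α * Ring.inverse (w ^ s - 1), (-1 : ZMod e)))
            (Set.Ico 1 (e - 1)) := by
          intro a ha' b hb' hab
          simp only [Set.mem_Ico] at ha' hb'
          simp only [Prod.mk.injEq] at hab
          have hga : a % (e - 1) ≠ 0 := by rw [Nat.mod_eq_of_lt ha'.2]; omega
          have hgb : b % (e - 1) ≠ 0 := by rw [Nat.mod_eq_of_lt hb'.2]; omega
          have h3 : (α * Ring.inverse (w ^ a - 1)) * w ^ a
              = (α * Ring.inverse (w ^ a - 1)) * w ^ b := by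
            rw [← vsol_add he hw hu hga, hab.1, vsol_add he hw hu hgb, ← hab.1]
          have h4 := cancel_w he hw hu h3
          by_contra hne
          exact vsol_ne he hw hu hα hga
            (h4 (by rw [Nat.mod_eq_of_lt ha'.2, Nat.mod_eq_of_lt hb'.2]; omega))
        rw [lambda_case2 he hw hu hα, Set.ncard_image_of_injOn hinj, ncard_Ico_nat]
        omega
      · rw [lambda_case3 he hw hu hα hβ,
          Set.ncard_image_of_injective _ (fun a b hab => (Prod.ext_iff.mp hab).2),
          ncard_ne_two (-1) (-1 - β) (fun hh => hβ (by linear_combination hh))]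

end Abstract


-- element of given order in the unit group of a finite field
lemma exists_order_elt (K : Type*) [Field K] [Fintype K] {d : ℕ} (hd : 0 < d)
    (hdvd : d ∣ Fintype.card K - 1) : ∃ u : Kˣ, orderOf u = d := by
  classical
  obtain ⟨g, hg⟩ := IsCyclic.exists_ofOrder_eq_natCard (α := Kˣ)
  have hcard : Nat.card Kˣ = Fintype.card K - 1 := by
    rw [Nat.card_units, Nat.card_eq_fintype_card]
  rw [hcard] at hg
  set q := Fintype.card K - 1 with hq
  obtain ⟨c, hc⟩ := hdvd
  refine ⟨g ^ c, ?_⟩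
  rw [orderOf_pow, hg]
  have hc0 : c ≠ 0 := by
    rintro rfl
    rw [mul_zero] at hc
    have : 0 < Fintype.card K := Fintype.card_pos
    have : 1 < Fintype.card K := Fintype.one_lt_card
    omega
  have hgcd : Nat.gcd q c = c := Nat.gcd_eq_right ⟨d, by rw [hc]; ring⟩
  rw [hgcd, hc, Nat.mul_div_cancel _ (by omega)]


/-- Corollary 2: for `R` a product of finite fields `F_{p_i^{r_i}}` with
`e(e-1) ∣ gcd(p_i^{r_i} - 1)`, there is an `(en, (en-1)/(e-1)+1, e-2)` ZDB
function on `R × Z_e`. -/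
theorem zdb_on_product_of_fields (k : ℕ) (hk : 0 < k) (p r : Fin k → ℕ)
    (hp : ∀ i, Nat.Prime (p i)) (hmono : StrictMono p) (hr : ∀ i, 0 < r i)
    (F : Fin k → Type*) [∀ i, Field (F i)] [∀ i, Fintype (F i)]
    (hF : ∀ i, Fintype.card (F i) = p i ^ r i)
    (n e : ℕ) (hn : n = ∏ i, p i ^ r i) (he : 0 < e)
    (hdiv : ∀ i, e * (e - 1) ∣ p i ^ r i - 1) :
    ∃ f : ((∀ i, F i) × ZMod e) → ZMod ((e * n - 1) / (e - 1) + 1),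
      IsZDB f (e * n) ((e * n - 1) / (e - 1) + 1) (e - 2) := by

  classical
  have hq2 : ∀ i, 2 ≤ p i ^ r i := fun i =>
    Nat.one_lt_pow (hr i).ne' (hp i).one_lt
  -- e = 1 is impossible
  have he2 : 2 ≤ e := by
    rcases Nat.lt_or_ge e 2 with h | h
    · exfalso
      have h1 : e = 1 := by omega
      have := hdiv ⟨0, hk⟩
      rw [h1] at this
      simp at this
      have := hq2 ⟨0, hk⟩
      omega
    · exact h
  -- the element w
  have hwex : ∀ i, ∃ u : (F i)ˣ, orderOf u = e - 1 := by
    intro i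
    apply exists_order_elt (F i) (by omega)
    rw [hF i]
    exact dvd_trans (dvd_mul_left _ _) (hdiv i)
  choose u hu using hwex
  set w : ∀ i, F i := fun i => ((u i : (F i)ˣ) : F i) with hwdef
  have hw : w ^ (e - 1) = 1 := by
    funext i
    have : (u i) ^ (e - 1) = 1 := by rw [← hu i]; exact pow_orderOf_eq_one _
    calc (w ^ (e - 1)) i = ((u i : (F i)ˣ) : F i) ^ (e - 1) := by rfl
    _ = (((u i) ^ (e - 1) : (F i)ˣ) : F i) := by rw [Units.val_pow_eq_pow_val]
    _ = 1 := by rw [this]; rfl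
  have hunit : ∀ s : ℕ, 0 < s → s < e - 1 → IsUnit (w ^ s - 1) := by
    intro s hs1 hs2
    have hne : ∀ i, (w ^ s - 1) i ≠ 0 := by
      intro i
      rw [Pi.sub_apply, Pi.pow_apply, Pi.one_apply, sub_ne_zero]
      intro hcontra
      have h1 : ((u i) ^ s : (F i)ˣ) = 1 := by
        apply Units.ext
        rw [Units.val_pow_eq_pow_val]
        exact hcontra
      have h2 : (u i) ^ s ≠ 1 := pow_ne_one_of_lt_orderOf (by omega) (by rw [hu i]; omega)
      exact h2 h1
    apply IsUnit.of_mul_eq_one (fun i => ((w ^ s - 1) i)⁻¹)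
    funext i
    exact mul_inv_cancel₀ (hne i)
  have hcardR : Fintype.card (∀ i, F i) = n := by
    rw [Fintype.card_pi, hn]
    exact Finset.prod_congr rfl (fun i _ => hF i)
  have := zdb_abstract (R := ∀ i, F i) he2 w hw hunit
  rw [hcardR] at this
  exact this
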